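/- Let n, L, m be integers with m + 2 ≤ L ≤ n and m + 2 < n/2. Let X = θ + ε with θ ∈ Θ_L deterministic and ε a random vector with E[ε_i] = 0, E[ε_i²] < ∞, and Cov(ε_i, ε_j) = γ_{|i-j|}. Let T_h = Σ_{i=1}^{n} (X_i − X_{i+h})² (indices modulo n), T = (T_1, …, T_{m+2})ᵀ, and let 𝒫 denote the orthogonal projection of ℝ^{m+2} onto the subspace 𝒜°_{m+2} = {a ∈ ℝ^{m+2} : Σ_{h=1}^{m+2} a_h = 0 and Σ_{h=1}^{m+2} h·a_h = 0}. Then 𝒫(E[T]) = 𝒫(u), where u ∈ ℝ^{m+2} has entries u_h = −2(n − h)·γ_h − 2h·γ_{n-h}; in particular, 𝒫(E[T]) depends neither on θ nor on γ_0. -/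

import Mathlib

open MeasureTheory Finset

/-- `Θ_L`: the set of piecewise-constant vectors in `ℝⁿ` all of whose constant
segments have length at least `L`. -/
def ThetaSet (n L : ℕ) : Set (Fin n → ℝ) :=
  {θ | ∃ (k : ℕ) (t : ℕ → ℕ) (c : ℕ → ℝ),
    0 < k ∧ t 0 = 0 ∧ t k = n ∧
    (∀ j < k, t j + L ≤ t (j + 1)) ∧
    (∀ j < k, ∀ i : Fin n, t j ≤ i.val → i.val < t (j + 1) → θ i = c j)}

/-- Circular lag-`h` squared-difference sum `T_h(x) = ∑_{i=1}^n (x_i - x_{i+h})²`,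
indices taken modulo `n`. -/
def Tcirc (n h : ℕ) (x : Fin n → ℝ) : ℝ :=
  ∑ i : Fin n, (x i - x ⟨(i.val + h) % n, Nat.mod_lt _ i.pos⟩) ^ 2

/-- The subspace `𝒜°_K = {a ∈ ℝᴷ : ∑ a_h = 0, ∑ h·a_h = 0}` of the Euclidean space
`ℝᴷ` (entries indexed by `h : Fin K`, corresponding to the 1-based lag `h+1`). -/
def ASubmodule (K : ℕ) : Submodule ℝ (EuclideanSpace ℝ (Fin K)) where
  carrier := {a | ∑ h : Fin K, a h = 0 ∧ ∑ h : Fin K, ((h.val : ℝ) + 1) * a h = 0}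
  add_mem' := by
    rintro x y ⟨hx1, hx2⟩ ⟨hy1, hy2⟩
    refine ⟨?_, ?_⟩
    · simpa [Finset.sum_add_distrib] using congrArg₂ (· + ·) hx1 hy1
    · have : ∑ h : Fin K, ((h.val : ℝ) + 1) * (x h + y h)
          = ∑ h : Fin K, ((h.val : ℝ) + 1) * x h
            + ∑ h : Fin K, ((h.val : ℝ) + 1) * y h := by
        rw [← Finset.sum_add_distrib]; apply Finset.sum_congr rfl; intros; ring
      simpa [this] using congrArg₂ (· + ·) hx2 hy2
  zero_mem' := by
    constructor <;> simp
  smul_mem' := by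
    rintro r x ⟨hx1, hx2⟩
    refine ⟨?_, ?_⟩
    · have : ∑ h : Fin K, (r • x) h = r * ∑ h : Fin K, x h := by
        rw [Finset.mul_sum]; apply Finset.sum_congr rfl; intros; simp
      rw [this, hx1, mul_zero]
    · have : ∑ h : Fin K, ((h.val : ℝ) + 1) * (r • x) h
          = r * ∑ h : Fin K, ((h.val : ℝ) + 1) * x h := by
        rw [Finset.mul_sum]; apply Finset.sum_congr rfl; intros; simp; ring
      rw [this, hx2, mul_zero]

section AuxStmt18

private lemma gap_le (t : ℕ → ℕ) (k L : ℕ) (hgap : ∀ j < k, t j + L ≤ t (j + 1)) :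
    ∀ b ≤ k, ∀ a < b, t a + L ≤ t b := by
  intro b
  induction b with
  | zero => omega
  | succ b ih =>
    intro hbk a hab
    have hb := hgap b (by omega)
    rcases Nat.lt_or_ge a b with h | h
    · have := ih (by omega) a h; omega
    · obtain rfl : a = b := by omega
      exact hb

private lemma exists_seg (n k : ℕ) (t : ℕ → ℕ) (h0 : t 0 = 0) (hkn : t k = n)
    (i : ℕ) (hi : i < n) : ∃ j < k, t j ≤ i ∧ i < t (j + 1) := by
  classical
  set j0 := Nat.findGreatest (fun j => t j ≤ i) k with hj0
  have hspec : t j0 ≤ i :=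
    Nat.findGreatest_spec (P := fun j => t j ≤ i) (Nat.zero_le k) (by omega)
  have hle : j0 ≤ k := Nat.findGreatest_le k
  have hlt : j0 < k := by
    by_contra h
    have hek : j0 = k := le_antisymm hle (by omega)
    rw [hek, hkn] at hspec; omega
  have hnot : ¬ t (j0 + 1) ≤ i :=
    Nat.findGreatest_is_greatest (P := fun j => t j ≤ i) (Nat.lt_succ_self j0) hlt
  exact ⟨j0, hlt, hspec, by omega⟩

private lemma jump_sep {n L : ℕ} {θ : Fin n → ℝ} (hn : 0 < n) (hθ : θ ∈ ThetaSet n L) {p q : ℕ}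
    (hpq : p < q) (hqn : q < n)
    (hp : θ ⟨p % n, Nat.mod_lt _ hn⟩ ≠ θ ⟨(p + 1) % n, Nat.mod_lt _ hn⟩)
    (hq : θ ⟨q % n, Nat.mod_lt _ hn⟩ ≠ θ ⟨(q + 1) % n, Nat.mod_lt _ hn⟩) :
    L ≤ q - p ∧ q - p + L ≤ n := by
  obtain ⟨k, t, c, hk, h0, hkn, hgap, hval⟩ := hθ
  have hmono : ∀ a ≤ k, t a ≤ n := by
    intro a ha
    rcases Nat.eq_or_lt_of_le ha with rfl | h
    · omega
    · have := gap_le t k L hgap k le_rfl a h; omega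
  have hFval : ∀ j < k, ∀ i, t j ≤ i → i < t (j + 1) → t (j + 1) ≤ n →
      θ ⟨i % n, Nat.mod_lt _ hn⟩ = c j := by
    intro j hj i h1 h2 h3
    have hi : i < n := by omega
    have e : (⟨i % n, Nat.mod_lt _ hn⟩ : Fin n) = ⟨i, hi⟩ := Fin.ext (Nat.mod_eq_of_lt hi)
    rw [e]
    exact hval j hj ⟨i, hi⟩ h1 h2
  have bdry : ∀ r, r + 1 < n →
      θ ⟨r % n, Nat.mod_lt _ hn⟩ ≠ θ ⟨(r + 1) % n, Nat.mod_lt _ hn⟩ →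
      ∃ j, j + 1 < k ∧ t (j + 1) = r + 1 := by
    intro r hr hne
    obtain ⟨j, hjk, hjl, hjr⟩ := exists_seg n k t h0 hkn r (by omega)
    have htn : t (j + 1) ≤ n := hmono (j + 1) hjk
    have heq : t (j + 1) = r + 1 := by
      by_contra hne2
      have e1 := hFval j hjk r hjl hjr htn
      have e2 := hFval j hjk (r + 1) (by omega) (by omega) htn
      exact hne (e1.trans e2.symm)
    have hjk1 : j + 1 < k := by
      by_contra h
      have hek : j + 1 = k := by omega
      rw [hek, hkn] at heq; omega
    exact ⟨j, hjk1, heq⟩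
  have bint : ∀ j, j + 1 < k → L ≤ t (j + 1) ∧ t (j + 1) + L ≤ n := by
    intro j hj
    have h1 := gap_le t k L hgap (j + 1) (by omega) 0 (by omega)
    have h2 := gap_le t k L hgap k le_rfl (j + 1) hj
    omega
  rcases Nat.lt_or_ge (q + 1) n with hq1 | hq1
  · obtain ⟨a, hak, hap⟩ := bdry p (by omega) hp
    obtain ⟨b, hbk, hbq⟩ := bdry q hq1 hq
    have hi1 := bint a hak
    have hi2 := bint b hbk
    have hab : a + 1 < b + 1 := by
      rcases Nat.lt_trichotomy (a + 1) (b + 1) with h | h | h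
      · exact h
      · exfalso; rw [h] at hap; omega
      · exfalso
        have := gap_le t k L hgap (a + 1) (by omega) (b + 1) h
        omega
    have := gap_le t k L hgap (b + 1) (by omega) (a + 1) hab
    omega
  · have hpn : p + 1 < n := by omega
    obtain ⟨a, hak, hap⟩ := bdry p hpn hp
    have hi := bint a hak
    omega

private def dstep (n : ℕ) (hn : 0 < n) (θ : Fin n → ℝ) (p : ℕ) : ℝ :=
  θ ⟨(p + 1) % n, Nat.mod_lt _ hn⟩ - θ ⟨p % n, Nat.mod_lt _ hn⟩

private lemma dstep_mod (n : ℕ) (hn : 0 < n) (θ : Fin n → ℝ) (p : ℕ) :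
    dstep n hn θ (p % n) = dstep n hn θ p := by
  unfold dstep
  have e1 : (⟨(p % n + 1) % n, Nat.mod_lt _ hn⟩ : Fin n) = ⟨(p + 1) % n, Nat.mod_lt _ hn⟩ :=
    Fin.ext (Nat.mod_add_mod p n 1)
  have e2 : (⟨p % n % n, Nat.mod_lt _ hn⟩ : Fin n) = ⟨p % n, Nat.mod_lt _ hn⟩ :=
    Fin.ext (Nat.mod_mod_of_dvd p dvd_rfl)
  rw [e1, e2]

private lemma dstep_jump {n : ℕ} (hn : 0 < n) {θ : Fin n → ℝ} {p : ℕ}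
    (hp : dstep n hn θ p ≠ 0) :
    θ ⟨p % n, Nat.mod_lt _ hn⟩ ≠ θ ⟨(p + 1) % n, Nat.mod_lt _ hn⟩ := by
  intro h
  apply hp
  unfold dstep
  rw [← h, sub_self]

private lemma dstep_mul_eq_zero {n L : ℕ} {θ : Fin n → ℝ} (hn : 0 < n) (hθ : θ ∈ ThetaSet n L)
    (hLn : L ≤ n) {r1 r2 : ℕ} (h12 : r1 < r2) (hδ : r2 - r1 < L) :
    dstep n hn θ r1 * dstep n hn θ r2 = 0 := by
  by_contra hne
  have hd1 : dstep n hn θ (r1 % n) ≠ 0 := by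
    rw [dstep_mod]; exact left_ne_zero_of_mul hne
  have hd2 : dstep n hn θ (r2 % n) ≠ 0 := by
    rw [dstep_mod]; exact right_ne_zero_of_mul hne
  set p1 := r1 % n with hp1
  set p2 := r2 % n with hp2
  have hδpos : 0 < r2 - r1 := by omega
  have hp1n : p1 < n := Nat.mod_lt _ hn
  have hp2n : p2 < n := Nat.mod_lt _ hn
  have hrel : p2 = (p1 + (r2 - r1)) % n := by
    rw [hp1, hp2, Nat.mod_add_mod]
    congr 1
    omega
  rcases Nat.lt_or_ge (p1 + (r2 - r1)) n with hc | hc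
  · have hp2e : p2 = p1 + (r2 - r1) := by rw [hrel, Nat.mod_eq_of_lt hc]
    have := jump_sep hn hθ (p := p1) (q := p2) (by omega) (by omega)
      (dstep_jump hn hd1) (dstep_jump hn hd2)
    omega
  · have hp2e : p2 = p1 + (r2 - r1) - n := by
      rw [hrel, Nat.mod_eq_sub_mod hc, Nat.mod_eq_of_lt (by omega)]
    have := jump_sep hn hθ (p := p2) (q := p1) (by omega) (by omega)
      (dstep_jump hn hd2) (dstep_jump hn hd1)
    omega

private lemma Tcirc_linear {n L : ℕ} {θ : Fin n → ℝ} (hn : 0 < n) (hθ : θ ∈ ThetaSet n L)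
    {H : ℕ} (hHL : H ≤ L) (hLn : L ≤ n) :
    Tcirc n H θ = H * Tcirc n 1 θ := by
  classical
  unfold Tcirc
  have tele : ∀ i : Fin n, (θ i - θ ⟨(i.val + H) % n, Nat.mod_lt _ i.pos⟩) ^ 2
      = (∑ j ∈ Finset.range H, dstep n hn θ (i.val + j)) ^ 2 := by
    intro i
    have e : θ i = θ ⟨(i.val + 0) % n, Nat.mod_lt _ hn⟩ := by
      congr 1
      exact (Fin.ext (by simp [Nat.mod_eq_of_lt i.isLt])).symm
    have hsum := Finset.sum_range_sub (fun j => θ ⟨(i.val + j) % n, Nat.mod_lt _ hn⟩) H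
    have h1 : θ ⟨(i.val + H) % n, Nat.mod_lt _ i.pos⟩ - θ i
        = ∑ j ∈ Finset.range H, dstep n hn θ (i.val + j) := by
      calc θ ⟨(i.val + H) % n, Nat.mod_lt _ i.pos⟩ - θ i
          = θ ⟨(i.val + H) % n, Nat.mod_lt _ hn⟩ - θ ⟨(i.val + 0) % n, Nat.mod_lt _ hn⟩ := by
            rw [← e]
        _ = ∑ j ∈ Finset.range H,
              (θ ⟨(i.val + (j + 1)) % n, Nat.mod_lt _ hn⟩
                - θ ⟨(i.val + j) % n, Nat.mod_lt _ hn⟩) := hsum.symm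
        _ = ∑ j ∈ Finset.range H, dstep n hn θ (i.val + j) :=
            Finset.sum_congr rfl (fun j _ => rfl)
    rw [show (θ i - θ ⟨(i.val + H) % n, Nat.mod_lt _ i.pos⟩) ^ 2
        = (θ ⟨(i.val + H) % n, Nat.mod_lt _ i.pos⟩ - θ i) ^ 2 by ring, h1]
  have key : ∀ i : Fin n, ∀ j1 ∈ Finset.range H, ∀ j2 ∈ Finset.range H, j1 ≠ j2 →
      dstep n hn θ (i.val + j1) * dstep n hn θ (i.val + j2) = 0 := by
    intro i j1 h1 j2 h2 hne
    simp only [Finset.mem_range] at h1 h2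
    rcases Nat.lt_or_ge j1 j2 with h | h
    · exact dstep_mul_eq_zero hn hθ hLn (by omega) (by omega)
    · rw [mul_comm]
      exact dstep_mul_eq_zero hn hθ hLn (by omega) (by omega)
  have step1 : (∑ i : Fin n, (θ i - θ ⟨(i.val + H) % n, Nat.mod_lt _ i.pos⟩) ^ 2)
      = ∑ i : Fin n, ∑ j ∈ Finset.range H, (dstep n hn θ (i.val + j)) ^ 2 := by
    refine Finset.sum_congr rfl fun i _ => ?_
    rw [tele i, sq, Finset.sum_mul_sum]
    refine Finset.sum_congr rfl fun j1 hj1 => ?_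
    rw [Finset.sum_eq_single_of_mem j1 hj1 (fun j2 hj2 hne => key i j1 hj1 j2 hj2 (Ne.symm hne))]
    exact (sq _).symm
  have step3 : ∀ j : ℕ, (∑ i : Fin n, (dstep n hn θ (i.val + j)) ^ 2)
      = ∑ i : Fin n, (dstep n hn θ i.val) ^ 2 := by
    intro j
    have hbij : Function.Bijective
        (fun i : Fin n => (⟨(i.val + j) % n, Nat.mod_lt _ hn⟩ : Fin n)) := by
      rw [Fintype.bijective_iff_injective_and_card]
      refine ⟨fun i1 i2 hi => ?_, rfl⟩
      have hv : (i1.val + j) % n = (i2.val + j) % n := congrArg Fin.val hi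
      have hm : i1.val % n = i2.val % n := Nat.ModEq.add_right_cancel' j hv
      rw [Nat.mod_eq_of_lt i1.isLt, Nat.mod_eq_of_lt i2.isLt] at hm
      exact Fin.ext hm
    have hb := Function.Bijective.sum_comp hbij (fun i : Fin n => (dstep n hn θ i.val) ^ 2)
    rw [← hb]
    refine Finset.sum_congr rfl fun i _ => ?_
    rw [dstep_mod n hn θ (i.val + j)]
  have step4 : (∑ i : Fin n, (θ i - θ ⟨(i.val + 1) % n, Nat.mod_lt _ i.pos⟩) ^ 2)
      = ∑ i : Fin n, (dstep n hn θ i.val) ^ 2 := by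
    refine Finset.sum_congr rfl fun i _ => ?_
    have e : (⟨i.val % n, Nat.mod_lt _ hn⟩ : Fin n) = i := Fin.ext (Nat.mod_eq_of_lt i.isLt)
    have hd : dstep n hn θ i.val = θ ⟨(i.val + 1) % n, Nat.mod_lt _ hn⟩ - θ i := by
      unfold dstep; rw [e]
    rw [hd]; ring
  rw [step1, Finset.sum_comm, Finset.sum_congr rfl (fun j _ => step3 j), Finset.sum_const,
    Finset.card_range, step4, nsmul_eq_mul]

private lemma integrable_sq_shift {Ω : Type*} [MeasurableSpace Ω] {μ : Measure Ω}
    [IsProbabilityMeasure μ]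
    (c : ℝ) (f g : Ω → ℝ) (hf : Integrable f μ) (hg : Integrable g μ)
    (hff : Integrable (fun ω => f ω * f ω) μ) (hgg : Integrable (fun ω => g ω * g ω) μ)
    (hfg : Integrable (fun ω => f ω * g ω) μ) :
    Integrable (fun ω => (c + f ω - g ω) ^ 2) μ := by
  have hrw : (fun ω => (c + f ω - g ω) ^ 2)
      = fun ω => c ^ 2 + 2 * c * f ω - 2 * c * g ω
          + (f ω * f ω - 2 * (f ω * g ω) + g ω * g ω) := by
    funext ω; ring
  rw [hrw]
  exact ((((integrable_const _).add (hf.const_mul _)).sub (hg.const_mul _)).add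
    ((hff.sub (hfg.const_mul _)).add hgg))

private lemma integral_sq_shift {Ω : Type*} [MeasurableSpace Ω] {μ : Measure Ω}
    [IsProbabilityMeasure μ]
    (c : ℝ) (f g : Ω → ℝ) (hf : Integrable f μ) (hg : Integrable g μ)
    (hff : Integrable (fun ω => f ω * f ω) μ) (hgg : Integrable (fun ω => g ω * g ω) μ)
    (hfg : Integrable (fun ω => f ω * g ω) μ) :
    ∫ ω, (c + f ω - g ω) ^ 2 ∂μ =
      c ^ 2 + 2 * c * (∫ ω, f ω ∂μ) - 2 * c * (∫ ω, g ω ∂μ)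
        + ((∫ ω, f ω * f ω ∂μ) - 2 * (∫ ω, f ω * g ω ∂μ) + (∫ ω, g ω * g ω ∂μ)) := by
  have hrw : (fun ω => (c + f ω - g ω) ^ 2)
      = fun ω => c ^ 2 + 2 * c * f ω - 2 * c * g ω
          + (f ω * f ω - 2 * (f ω * g ω) + g ω * g ω) := by
    funext ω; ring
  rw [hrw]
  have I1 : Integrable (fun ω => c ^ 2 + 2 * c * f ω) μ :=
    (integrable_const _).add (hf.const_mul _)
  have I1' : Integrable (fun ω => 2 * c * f ω) μ := hf.const_mul _
  have I2 : Integrable (fun ω => c ^ 2 + 2 * c * f ω - 2 * c * g ω) μ := I1.sub (hg.const_mul _)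
  have I2' : Integrable (fun ω => 2 * c * g ω) μ := hg.const_mul _
  have I3' : Integrable (fun ω => 2 * (f ω * g ω)) μ := hfg.const_mul _
  have I3 : Integrable (fun ω => f ω * f ω - 2 * (f ω * g ω)) μ := hff.sub I3'
  have I4 : Integrable (fun ω => f ω * f ω - 2 * (f ω * g ω) + g ω * g ω) μ := I3.add hgg
  rw [integral_add I2 I4, integral_sub I1 I2',
    integral_add (integrable_const _) I1', integral_add I3 hgg,
    integral_sub hff I3', integral_const, integral_const_mul,
    integral_const_mul, integral_const_mul]
  simp

private lemma dist_mod (n H i : ℕ) (hH : H ≤ n) (hi : i < n) :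
    (((i : ℤ)) - (((i + H) % n : ℕ) : ℤ)).natAbs = if i + H < n then H else n - H := by
  have h1 : (i + H) % n = if i + H < n then i + H else i + H - n := by
    split
    · exact Nat.mod_eq_of_lt ‹_›
    · rw [Nat.mod_eq_sub_mod (by omega), Nat.mod_eq_of_lt (by omega)]
  rw [h1]
  split <;> omega

private lemma sum_gamma (n H : ℕ) (hH : 0 < H) (hHn : H < n) (γ : ℕ → ℝ) :
    (∑ i : Fin n, γ ((((i.val : ℤ)) - (((i.val + H) % n : ℕ) : ℤ)).natAbs))
      = ((n - H : ℕ) : ℝ) * γ H + (H : ℝ) * γ (n - H) := by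
  rw [Fin.sum_univ_eq_sum_range (fun i => γ ((((i : ℤ)) - (((i + H) % n : ℕ) : ℤ)).natAbs)) n]
  rw [Finset.sum_congr rfl (fun i hi => by
    rw [dist_mod n H i (by omega) (Finset.mem_range.mp hi)])]
  simp only [apply_ite γ]
  rw [Finset.sum_ite]
  have hfil : Finset.filter (fun i => i + H < n) (Finset.range n) = Finset.range (n - H) := by
    ext x; simp only [Finset.mem_filter, Finset.mem_range]; omega
  have hfil2 : Finset.filter (fun x => ¬ x + H < n) (Finset.range n) = Finset.Ico (n - H) n := by
    ext x; simp only [Finset.mem_filter, Finset.mem_range, Finset.mem_Ico]; omega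
  rw [Finset.sum_const, Finset.sum_const, hfil, hfil2, Finset.card_range, Nat.card_Ico]
  have hnn : n - (n - H) = H := by omega
  rw [hnn]
  simp [nsmul_eq_mul]

private lemma integral_Tcirc {Ω : Type*} [MeasurableSpace Ω] (μ : Measure Ω)
    [IsProbabilityMeasure μ]
    {n : ℕ} (H : ℕ) (hH : 0 < H) (hHn : H < n) (γ : ℕ → ℝ) (θ : Fin n → ℝ) (ε : Fin n → Ω → ℝ)
    (hint : ∀ i, Integrable (ε i) μ)
    (hint2 : ∀ i j, Integrable (fun ω => ε i ω * ε j ω) μ)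
    (hmean : ∀ i, ∫ ω, ε i ω ∂μ = 0)
    (hcov : ∀ i j : Fin n, ∫ ω, ε i ω * ε j ω ∂μ = γ ((i.val : ℤ) - (j.val : ℤ)).natAbs) :
    ∫ ω, Tcirc n H (fun i => θ i + ε i ω) ∂μ
      = Tcirc n H θ + (n : ℝ) * (2 * γ 0)
        - 2 * (((n - H : ℕ) : ℝ) * γ H + (H : ℝ) * γ (n - H)) := by
  have hn : 0 < n := by omega
  have hintg : ∀ i : Fin n, Integrable (fun ω =>
      ((θ i + ε i ω) - (θ ⟨(i.val + H) % n, Nat.mod_lt _ i.pos⟩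
        + ε ⟨(i.val + H) % n, Nat.mod_lt _ i.pos⟩ ω)) ^ 2) μ := by
    intro i
    have hrw : (fun ω => ((θ i + ε i ω) - (θ ⟨(i.val + H) % n, Nat.mod_lt _ i.pos⟩
        + ε ⟨(i.val + H) % n, Nat.mod_lt _ i.pos⟩ ω)) ^ 2)
        = fun ω => ((θ i - θ ⟨(i.val + H) % n, Nat.mod_lt _ i.pos⟩)
            + ε i ω - ε ⟨(i.val + H) % n, Nat.mod_lt _ i.pos⟩ ω) ^ 2 := by
      funext ω; ring
    rw [hrw]
    exact integrable_sq_shift _ _ _ (hint i) (hint _) (hint2 i i) (hint2 _ _) (hint2 i _)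
  calc ∫ ω, Tcirc n H (fun i => θ i + ε i ω) ∂μ
      = ∫ ω, ∑ i : Fin n, ((θ i + ε i ω) - (θ ⟨(i.val + H) % n, Nat.mod_lt _ i.pos⟩
          + ε ⟨(i.val + H) % n, Nat.mod_lt _ i.pos⟩ ω)) ^ 2 ∂μ := rfl
    _ = ∑ i : Fin n, ∫ ω, ((θ i + ε i ω) - (θ ⟨(i.val + H) % n, Nat.mod_lt _ i.pos⟩
          + ε ⟨(i.val + H) % n, Nat.mod_lt _ i.pos⟩ ω)) ^ 2 ∂μ :=
        integral_finset_sum _ (fun i _ => hintg i)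
    _ = ∑ i : Fin n, ((θ i - θ ⟨(i.val + H) % n, Nat.mod_lt _ i.pos⟩) ^ 2 + 2 * γ 0
          - 2 * γ ((((i.val : ℤ)) - (((i.val + H) % n : ℕ) : ℤ)).natAbs)) := by
        refine Finset.sum_congr rfl fun i _ => ?_
        have hrw : (fun ω => ((θ i + ε i ω) - (θ ⟨(i.val + H) % n, Nat.mod_lt _ i.pos⟩
            + ε ⟨(i.val + H) % n, Nat.mod_lt _ i.pos⟩ ω)) ^ 2)
            = fun ω => ((θ i - θ ⟨(i.val + H) % n, Nat.mod_lt _ i.pos⟩)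
                + ε i ω - ε ⟨(i.val + H) % n, Nat.mod_lt _ i.pos⟩ ω) ^ 2 := by
          funext ω; ring
        rw [hrw, integral_sq_shift _ _ _ (hint i) (hint _) (hint2 i i) (hint2 _ _) (hint2 i _),
          hmean i, hmean ⟨(i.val + H) % n, Nat.mod_lt _ i.pos⟩, hcov i i,
          hcov ⟨(i.val + H) % n, Nat.mod_lt _ i.pos⟩ ⟨(i.val + H) % n, Nat.mod_lt _ i.pos⟩,
          hcov i ⟨(i.val + H) % n, Nat.mod_lt _ i.pos⟩]
        simp only [sub_self, Int.natAbs_zero]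
        ring
    _ = (∑ i : Fin n, (θ i - θ ⟨(i.val + H) % n, Nat.mod_lt _ i.pos⟩) ^ 2) + (n : ℝ) * (2 * γ 0)
          - 2 * ∑ i : Fin n, γ ((((i.val : ℤ)) - (((i.val + H) % n : ℕ) : ℤ)).natAbs) := by
        rw [Finset.sum_sub_distrib, Finset.sum_add_distrib, Finset.sum_const, ← Finset.mul_sum]
        simp only [Finset.card_univ, Fintype.card_fin, nsmul_eq_mul]
    _ = Tcirc n H θ + (n : ℝ) * (2 * γ 0)
          - 2 * (((n - H : ℕ) : ℝ) * γ H + (H : ℝ) * γ (n - H)) := by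
        rw [sum_gamma n H hH hHn γ]
        rfl

end AuxStmt18

/-- Let `θ ∈ Θ_L`, `ε` mean-zero with stationary covariances,
`m + 2 ≤ L ≤ n`, `m + 2 < n/2`, and `T = (T_1, …, T_{m+2})ᵀ` the circular lag
squared-difference sums of `X = θ + ε`. Then the orthogonal projection of `E[T]`
onto `𝒜°_{m+2}` equals the projection of the vector `u` with
`u_h = −2(n−h)γ_h − 2h γ_{n−h}`; in particular it depends on neither `θ` nor `γ_0`. -/
theorem stmt_18
    {Ω : Type*} [MeasurableSpace Ω] (μ : Measure Ω) [IsProbabilityMeasure μ]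
    (n L m : ℕ) (hmL : m + 2 ≤ L) (hLn : L ≤ n) (hmn : 2 * (m + 2) < n)
    (γ : ℕ → ℝ) (θ : Fin n → ℝ) (hθ : θ ∈ ThetaSet n L)
    (ε : Fin n → Ω → ℝ)
    (hint : ∀ i, Integrable (ε i) μ)
    (hint2 : ∀ i j, Integrable (fun ω => ε i ω * ε j ω) μ)
    (hmean : ∀ i, ∫ ω, ε i ω ∂μ = 0)
    (hcov : ∀ i j : Fin n, ∫ ω, ε i ω * ε j ω ∂μ = γ ((i.val : ℤ) - (j.val : ℤ)).natAbs) :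
    Submodule.orthogonalProjectionOnto (ASubmodule (m + 2))
        ((WithLp.equiv 2 (Fin (m + 2) → ℝ)).symm
          (fun h => ∫ ω, Tcirc n (h.val + 1) (fun i => θ i + ε i ω) ∂μ))
      = Submodule.orthogonalProjectionOnto (ASubmodule (m + 2))
        ((WithLp.equiv 2 (Fin (m + 2) → ℝ)).symm
          (fun h => -2 * ((n : ℝ) - ((h.val : ℝ) + 1)) * γ (h.val + 1)
            - 2 * ((h.val : ℝ) + 1) * γ (n - (h.val + 1)))) := by
  have hn0 : 0 < n := by omega
  have hdiff : ∀ h : Fin (m + 2),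
      (∫ ω, Tcirc n (h.val + 1) (fun i => θ i + ε i ω) ∂μ)
        - (-2 * ((n : ℝ) - ((h.val : ℝ) + 1)) * γ (h.val + 1)
            - 2 * ((h.val : ℝ) + 1) * γ (n - (h.val + 1)))
      = ((h.val : ℝ) + 1) * Tcirc n 1 θ + 2 * (n : ℝ) * γ 0 := by
    intro h
    have hlt := h.isLt
    have hHn : h.val + 1 < n := by omega
    rw [integral_Tcirc μ (h.val + 1) (by omega) hHn γ θ ε hint hint2 hmean hcov]
    rw [Tcirc_linear hn0 hθ (show h.val + 1 ≤ L by omega) hLn]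
    have hle : h.val + 1 ≤ n := by omega
    push_cast [Nat.cast_sub hle]
    ring
  have hmem : ((WithLp.equiv 2 (Fin (m + 2) → ℝ)).symm
        (fun h => ∫ ω, Tcirc n (h.val + 1) (fun i => θ i + ε i ω) ∂μ)
      - (WithLp.equiv 2 (Fin (m + 2) → ℝ)).symm
        (fun h => -2 * ((n : ℝ) - ((h.val : ℝ) + 1)) * γ (h.val + 1)
          - 2 * ((h.val : ℝ) + 1) * γ (n - (h.val + 1)))) ∈ (ASubmodule (m + 2))ᗮ := by
    rw [Submodule.mem_orthogonal]
    intro a ha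
    obtain ⟨ha1, ha2⟩ := ha
    have hsum : (∑ h : Fin (m + 2),
        a h * ((∫ ω, Tcirc n (h.val + 1) (fun i => θ i + ε i ω) ∂μ)
          - (-2 * ((n : ℝ) - ((h.val : ℝ) + 1)) * γ (h.val + 1)
              - 2 * ((h.val : ℝ) + 1) * γ (n - (h.val + 1))))) = 0 := by
      have hexp : (∑ h : Fin (m + 2),
          a h * ((∫ ω, Tcirc n (h.val + 1) (fun i => θ i + ε i ω) ∂μ)
            - (-2 * ((n : ℝ) - ((h.val : ℝ) + 1)) * γ (h.val + 1)
                - 2 * ((h.val : ℝ) + 1) * γ (n - (h.val + 1)))))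
          = Tcirc n 1 θ * (∑ h : Fin (m + 2), ((h.val : ℝ) + 1) * a h)
            + (2 * (n : ℝ) * γ 0) * (∑ h : Fin (m + 2), a h) := by
        rw [Finset.mul_sum, Finset.mul_sum, ← Finset.sum_add_distrib]
        refine Finset.sum_congr rfl fun h _ => ?_
        rw [hdiff h]
        ring
      rw [hexp, ha1, ha2, mul_zero, mul_zero, add_zero]
    simp only [mul_comm (a _)] at hsum
    simpa [PiLp.inner_apply, RCLike.inner_apply, conj_trivial, PiLp.sub_apply,
      WithLp.equiv_symm_apply, mul_sub] using hsum
  have hzero := Submodule.orthogonalProjectionOnto_apply_of_mem_orthogonal hmem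
  rw [map_sub] at hzero
  exact sub_eq_zero.mp hzero
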